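/- arXiv:1309.1135 — 5 statements merged into one kernel-verified Lean document; each statement's English description precedes it below -/
import Mathlib

section
/- Let n ≥ 3, γ > 0 and a ∈ ℝⁿ. Define the bubble U(y) = (γ/(γ² + |y − a|²))^{(n−2)/2} on ℝⁿ and set λ* = √(γ² + |a|²). For λ > 0 let U^λ denote the Kelvin inversion of U, U^λ(y) = (λ/|y|)^{n−2}·U(λ²y/|y|²). Then for every y ∈ ℝⁿ with |y| > λ: if 0 < λ < λ* then U(y) − U^λ(y) > 0, and if λ > λ* then U(y) − U^λ(y) < 0. -/
open Metric Set

noncomputable section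

abbrev Euc (n : ℕ) := EuclideanSpace ℝ (Fin n)

/-- The inverted point `y^λ = λ²y/|y|²`. -/
def invPt {n : ℕ} (lam : ℝ) (y : Euc n) : Euc n := (lam ^ 2 / ‖y‖ ^ 2) • y

/-- The Kelvin inversion `f^λ(y) = (λ/|y|)^{n-2} f(y^λ)`. -/
def kelvin (n : ℕ) (lam : ℝ) (f : Euc n → ℝ) (y : Euc n) : ℝ :=
  (lam / ‖y‖) ^ ((n : ℝ) - 2) * f (invPt lam y)

set_option maxHeartbeats 1000000 in
/-- dichotomy for the Kelvin inversion of a bubble across the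
critical radius `λ* = √(γ² + |a|²)`. -/
theorem bubble_kelvin_dichotomy (n : ℕ) (hn : 3 ≤ n) (γ : ℝ) (hγ : 0 < γ) (a : Euc n)
    (U : Euc n → ℝ)
    (hU : ∀ y : Euc n, U y = (γ / (γ ^ 2 + ‖y - a‖ ^ 2)) ^ (((n : ℝ) - 2) / 2))
    (lamStar : ℝ) (hls : lamStar = Real.sqrt (γ ^ 2 + ‖a‖ ^ 2)) :
    ∀ lam : ℝ, 0 < lam → ∀ y : Euc n, lam < ‖y‖ →
      (lam < lamStar → 0 < U y - kelvin n lam U y) ∧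
      (lamStar < lam → U y - kelvin n lam U y < 0) := by
  intro lam hlam y hy
  have hr : (0:ℝ) < ‖y‖ := hlam.trans hy
  have hrne : ‖y‖ ≠ 0 := ne_of_gt hr
  have hn3 : (3:ℝ) ≤ (n:ℝ) := by exact_mod_cast hn
  set p : ℝ := ((n:ℝ) - 2) / 2 with hpdef
  have hp : 0 < p := by rw [hpdef]; linarith
  set r : ℝ := ‖y‖ with hrdef
  set b : ℝ := ‖a‖ with hbdef
  set s : ℝ := (inner ℝ y a : ℝ) with hsdef
  set D : ℝ := γ^2 * r^2 + lam^4 - 2 * lam^2 * s + b^2 * r^2 with hDdef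
  -- norm of the inverted point
  have hnz : ‖invPt lam y‖ = lam^2 / r := by
    rw [invPt, norm_smul, Real.norm_eq_abs]
    rw [abs_of_nonneg (by positivity : (0:ℝ) ≤ lam^2 / ‖y‖^2)]
    field_simp
    rw [← hrdef]; exact mul_inv_cancel₀ hrne
  have hinz : (inner ℝ (invPt lam y) a : ℝ) = (lam^2 / r^2) * s := by
    rw [invPt, real_inner_smul_left]
  have hz : ‖invPt lam y - a‖^2 = lam^4/r^2 - 2*(lam^2/r^2)*s + b^2 := by
    rw [norm_sub_sq_real, hnz, hinz, ← hbdef]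
    field_simp
  have hDen : γ^2 + ‖invPt lam y - a‖^2 = D / r^2 := by
    rw [hz, hDdef]; field_simp; ring
  have hDpos : 0 < D := by
    have h1 : 0 < γ^2 + ‖invPt lam y - a‖^2 := by positivity
    have h2 : D = r^2 * (γ^2 + ‖invPt lam y - a‖^2) := by
      rw [hDen]; field_simp
    rw [h2]; positivity
  -- expression for the Kelvin inversion
  have h2p : (n:ℝ) - 2 = 2 * p := by rw [hpdef]; ring
  have hk : kelvin n lam U y = (lam^2 * γ / D) ^ p := by
    rw [kelvin, hU, hDen, ← hrdef, h2p, Real.rpow_mul (by positivity : (0:ℝ) ≤ lam / r),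
      show ((2:ℝ) = ((2:ℕ):ℝ)) by norm_num, Real.rpow_natCast,
      ← Real.mul_rpow (by positivity) (by positivity)]
    congr 1
    field_simp
  have hUy : U y = (γ / (γ^2 + ‖y - a‖^2)) ^ p := by rw [hU]
  have hyd : ‖y - a‖^2 = r^2 - 2*s + b^2 := by
    rw [norm_sub_sq_real, ← hrdef, ← hbdef, ← hsdef]
  have hdApos : 0 < γ^2 + ‖y - a‖^2 := by positivity
  have key : D - lam^2 * (γ^2 + ‖y - a‖^2) = (r^2 - lam^2) * (γ^2 + b^2 - lam^2) := by
    rw [hyd, hDdef]; ring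
  have hrl : 0 < r^2 - lam^2 := by
    have : lam < r := hy
    nlinarith
  have hApos : 0 < γ / (γ^2 + ‖y - a‖^2) := by positivity
  have hBpos : 0 < lam^2 * γ / D := by positivity
  constructor
  · intro hlt
    have hc : lam^2 < γ^2 + b^2 := by
      have := hlt.trans_eq hls
      have h := (Real.lt_sqrt hlam.le).mp this
      linarith
    have hpos : 0 < D - lam^2 * (γ^2 + ‖y - a‖^2) := by
      rw [key]; exact mul_pos hrl (by linarith)
    have hBA : lam^2 * γ / D < γ / (γ^2 + ‖y - a‖^2) := by
      rw [div_lt_div_iff₀ hDpos hdApos]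
      nlinarith [mul_pos hγ hpos]
    have := Real.rpow_lt_rpow hBpos.le hBA hp
    rw [hUy, hk]
    linarith
  · intro hlt
    have hc : γ^2 + b^2 < lam^2 := by
      rw [hls] at hlt
      have h := (Real.sqrt_lt' hlam).mp hlt
      linarith
    have hneg : D - lam^2 * (γ^2 + ‖y - a‖^2) < 0 := by
      rw [key]
      exact mul_neg_of_pos_of_neg hrl (by linarith)
    have hAB : γ / (γ^2 + ‖y - a‖^2) < lam^2 * γ / D := by
      rw [div_lt_div_iff₀ hdApos hDpos]
      nlinarith [mul_pos hγ (neg_pos.mpr hneg)]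
    have := Real.rpow_lt_rpow hApos.le hAB hp
    rw [hUy, hk]
    linarith
end
end

section
/- Let n ≥ 1 and let g : (0,∞) → ℝ be twice continuously differentiable. Define h : ℝⁿ ∖ {0} → ℝ by h(y) = yₙ·|y|^{−n}·g(|y|), where yₙ is the last coordinate of y. Then for every y ≠ 0: (i) Δh(y) = yₙ·|y|^{−n}·( g''(|y|) − ((n−1)/|y|)·g'(|y|) ); (ii) if yₙ = 0, then (∂h/∂yₙ)(y) = |y|^{−n}·g(|y|). -/
open Set

noncomputable section

/-- Index of the last coordinate. -/
def lastIdx (n : ℕ) (h0 : 0 < n) : Fin n := ⟨n - 1, by omega⟩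

/-- Laplacian as the sum of pure second partial derivatives. -/
def lap (n : ℕ) (u : Euc n → ℝ) (x : Euc n) : ℝ :=
  ∑ i : Fin n, iteratedFDeriv ℝ 2 u x
    ![EuclideanSpace.single i (1 : ℝ), EuclideanSpace.single i (1 : ℝ)]

theorem hasFDerivAt_norm_of_ne' {E : Type*} [NormedAddCommGroup E] [InnerProductSpace ℝ E]
    {z : E} (hz : z ≠ 0) :
    HasFDerivAt (fun x : E => ‖x‖) (‖z‖⁻¹ • innerSL ℝ z) z := by
  have hz' : ‖z‖ ≠ 0 := norm_ne_zero_iff.mpr hz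
  have h1 : HasFDerivAt (fun x : E => ‖x‖ ^ 2) (2 • innerSL ℝ z) z :=
    (hasStrictFDerivAt_norm_sq z).hasFDerivAt
  have h2 : HasDerivAt Real.sqrt (1 / (2 * Real.sqrt (‖z‖ ^ 2))) (‖z‖ ^ 2) :=
    Real.hasDerivAt_sqrt (by positivity)
  have h3 := h2.comp_hasFDerivAt z h1
  have hfun : (Real.sqrt ∘ fun x : E => ‖x‖ ^ 2) = fun x : E => ‖x‖ := by
    funext x; simp [Function.comp, Real.sqrt_sq (norm_nonneg x)]
  rw [hfun] at h3
  refine h3.congr_fderiv ?_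
  ext w
  simp [Real.sqrt_sq (norm_nonneg z), two_smul]
  field_simp
  ring

def psiF (g : ℝ → ℝ) (N : ℝ) : ℝ → ℝ := fun t => t ^ (-N) * g t
def P1F (g : ℝ → ℝ) (N : ℝ) : ℝ → ℝ :=
  fun t => (-N) * t ^ (-N - 1) * g t + t ^ (-N) * deriv g t
def P2F (g : ℝ → ℝ) (N : ℝ) : ℝ → ℝ :=
  fun t => (-N) * (-N - 1) * t ^ (-N - 2) * g t + (-(2 * N)) * t ^ (-N - 1) * deriv g t
    + t ^ (-N) * deriv (deriv g) t
def PhiF (g : ℝ → ℝ) (N : ℝ) : ℝ → ℝ := fun t => P1F g N t * t⁻¹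
def Phi'F (g : ℝ → ℝ) (N : ℝ) : ℝ → ℝ := fun t => P2F g N t * t⁻¹ + P1F g N t * (-(t ^ 2)⁻¹)

theorem hasDerivAt_psiF {g : ℝ → ℝ} {N t : ℝ} (ht : 0 < t)
    (hg : HasDerivAt g (deriv g t) t) : HasDerivAt (psiF g N) (P1F g N t) t := by
  have h1 : HasDerivAt (fun s : ℝ => s ^ (-N)) ((-N) * t ^ (-N - 1)) t :=
    Real.hasDerivAt_rpow_const (Or.inl ht.ne')
  exact h1.mul hg

theorem hasDerivAt_P1F {g : ℝ → ℝ} {N t : ℝ} (ht : 0 < t)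
    (hg : HasDerivAt g (deriv g t) t)
    (hg' : HasDerivAt (deriv g) (deriv (deriv g) t) t) :
    HasDerivAt (P1F g N) (P2F g N t) t := by
  have h1 : HasDerivAt (fun s : ℝ => s ^ (-N - 1)) ((-N - 1) * t ^ (-N - 2)) t := by
    have := Real.hasDerivAt_rpow_const (x := t) (p := -N - 1) (Or.inl ht.ne')
    convert this using 2
    ring
  have h2 : HasDerivAt (fun s : ℝ => s ^ (-N)) ((-N) * t ^ (-N - 1)) t :=
    Real.hasDerivAt_rpow_const (Or.inl ht.ne')
  have h3 := ((h1.const_mul (-N)).mul hg).add (h2.mul hg')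
  refine h3.congr_deriv ?_
  simp only [P2F]
  ring

theorem hasDerivAt_PhiF {g : ℝ → ℝ} {N t : ℝ} (ht : 0 < t)
    (hg : HasDerivAt g (deriv g t) t)
    (hg' : HasDerivAt (deriv g) (deriv (deriv g) t) t) :
    HasDerivAt (PhiF g N) (Phi'F g N t) t :=
  (hasDerivAt_P1F ht hg hg').mul (hasDerivAt_inv ht.ne')

set_option maxHeartbeats 1000000 in
theorem final_alg {g : ℝ → ℝ} {N rr yL : ℝ} (hrr : 0 < rr) :
    P1F g N rr * rr⁻¹ * yL + Phi'F g N rr * rr⁻¹ * yL * rr ^ 2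
      + N * (PhiF g N rr * yL) + PhiF g N rr * yL
    = yL * rr ^ (-N) * (deriv (deriv g) rr - (N - 1) / rr * deriv g rr) := by
  have e1 : rr ^ (-N - 1) = rr ^ (-N) * rr⁻¹ := by
    rw [show -N - 1 = -N + (-1) by ring, Real.rpow_add hrr, Real.rpow_neg_one]
  have e2 : rr ^ (-N - 2) = rr ^ (-N) * rr⁻¹ * rr⁻¹ := by
    rw [show -N - 2 = -N + (-1) + (-1) by ring, Real.rpow_add hrr, Real.rpow_add hrr,
      Real.rpow_neg_one]
  simp only [P1F, P2F, PhiF, Phi'F, e1, e2]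
  field_simp
  ring

set_option maxHeartbeats 1000000 in
/-- Laplacian and boundary normal derivative of
`h(y) = yₙ |y|^{-n} g(|y|)`. -/
theorem laplacian_of_boundary_test_function (n : ℕ) (hn : 1 ≤ n) (h0 : 0 < n)
    (g : ℝ → ℝ) (hg : ContDiffOn ℝ 2 g (Set.Ioi (0 : ℝ)))
    (h : Euc n → ℝ)
    (hh : ∀ y : Euc n, h y = y (lastIdx n h0) * ‖y‖ ^ (-(n : ℝ)) * g ‖y‖) :
    ∀ y : Euc n, y ≠ 0 →
      lap n h y = y (lastIdx n h0) * ‖y‖ ^ (-(n : ℝ))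
          * (deriv (deriv g) ‖y‖ - ((n : ℝ) - 1) / ‖y‖ * deriv g ‖y‖) ∧
      (y (lastIdx n h0) = 0 →
        fderiv ℝ h y (EuclideanSpace.single (lastIdx n h0) (1 : ℝ))
          = ‖y‖ ^ (-(n : ℝ)) * g ‖y‖) := by
  set L := lastIdx n h0 with hLdef
  set N : ℝ := (n : ℝ) with hNdef
  have hgd : ∀ t : ℝ, 0 < t → HasDerivAt g (deriv g t) t := by
    intro t ht
    exact ((hg.differentiableOn two_ne_zero t ht).differentiableAt
      (isOpen_Ioi.mem_nhds ht)).hasDerivAt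
  have hgC1 : ContDiffOn ℝ 1 (deriv g) (Ioi 0) :=
    hg.deriv_of_isOpen isOpen_Ioi (by norm_num)
  have hgd' : ∀ t : ℝ, 0 < t → HasDerivAt (deriv g) (deriv (deriv g) t) t := by
    intro t ht
    exact ((hgC1.differentiableOn one_ne_zero t ht).differentiableAt
      (isOpen_Ioi.mem_nhds ht)).hasDerivAt
  set D : Euc n → (Euc n →L[ℝ] ℝ) := fun z =>
    psiF g N ‖z‖ • (EuclideanSpace.proj L : Euc n →L[ℝ] ℝ)
      + (z L * PhiF g N ‖z‖) • innerSL ℝ z with hDdef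
  have key : ∀ z : Euc n, z ≠ 0 → HasFDerivAt h (D z) z := by
    intro z hz
    have hz' : (0:ℝ) < ‖z‖ := norm_pos_iff.mpr hz
    have h1 := (EuclideanSpace.proj (𝕜 := ℝ) L : Euc n →L[ℝ] ℝ).hasFDerivAt (x := z)
    have h2 : HasFDerivAt (fun w : Euc n => psiF g N ‖w‖)
        (P1F g N ‖z‖ • (‖z‖⁻¹ • innerSL ℝ z)) z :=
      (hasDerivAt_psiF hz' (hgd _ hz')).comp_hasFDerivAt z (hasFDerivAt_norm_of_ne' hz)
    have h3 := h1.mul h2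
    have hfun : h = fun w : Euc n =>
        (EuclideanSpace.proj (𝕜 := ℝ) L : Euc n →L[ℝ] ℝ) w * psiF g N ‖w‖ := by
      funext w; rw [hh w]; simp [psiF, mul_assoc]
    rw [hfun]
    refine h3.congr_fderiv ?_
    rw [hDdef]
    ext w
    simp [PhiF]
    ring
  intro y hy
  have hr : (0:ℝ) < ‖y‖ := norm_pos_iff.mpr hy
  set r := ‖y‖ with hrdef
  have hfder : ∀ z : Euc n, z ≠ 0 → fderiv ℝ h z = D z := fun z hz => (key z hz).fderiv
  have hmem : {z : Euc n | z ≠ 0} ∈ nhds y := isOpen_ne.mem_nhds hy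
  have hev : fderiv ℝ h =ᶠ[nhds y] D := Filter.eventually_of_mem hmem fun z hz => hfder z hz
  constructor
  · -- Laplacian computation
    have hnorm' := hasFDerivAt_norm_of_ne' hy
    have ha : HasFDerivAt (fun z : Euc n => psiF g N ‖z‖)
        (P1F g N r • (r⁻¹ • innerSL ℝ y)) y :=
      by have := (hasDerivAt_psiF (N := N) hr (hgd _ hr)).comp_hasFDerivAt y hnorm'; exact this
    have hb : HasFDerivAt (fun z : Euc n => PhiF g N ‖z‖)
        (Phi'F g N r • (r⁻¹ • innerSL ℝ y)) y :=
      by have := (hasDerivAt_PhiF (N := N) hr (hgd _ hr) (hgd' _ hr)).comp_hasFDerivAt y hnorm'; exact this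
    have hDdiff : DifferentiableAt ℝ D y := by
      have d2 : DifferentiableAt ℝ (fun z : Euc n => z L * PhiF g N ‖z‖) y := by
        have := ((EuclideanSpace.proj (𝕜 := ℝ) L : Euc n →L[ℝ] ℝ).hasFDerivAt
          (x := y)).differentiableAt.mul hb.differentiableAt
        exact this
      have d3 : DifferentiableAt ℝ (fun z : Euc n => innerSL ℝ z) y :=
        (innerSL ℝ (E := Euc n)).differentiableAt
      exact (ha.differentiableAt.smul_const _).add (d2.smul d3)
    have hdiff_fh : DifferentiableAt ℝ (fderiv ℝ h) y := hev.differentiableAt_iff.mpr hDdiff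
    have hterm : ∀ i : Fin n,
        iteratedFDeriv ℝ 2 h y ![EuclideanSpace.single i (1:ℝ), EuclideanSpace.single i (1:ℝ)]
          = (EuclideanSpace.single i (1:ℝ) L) * (P1F g N r * (r⁻¹ * y i))
            + ((y L * y i) * (Phi'F g N r * (r⁻¹ * y i))
              + PhiF g N r * (y L * 1 + y i * (EuclideanSpace.single i (1:ℝ) L))) := by
      intro i
      set e := EuclideanSpace.single i (1:ℝ) with hedef
      rw [iteratedFDeriv_two_apply]
      simp only [Matrix.cons_val_zero, Matrix.cons_val_one, Matrix.head_cons]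
      have hsw : fderiv ℝ (fderiv ℝ h) y e e = fderiv ℝ (fun z => fderiv ℝ h z e) y e := by
        rw [fderiv_clm_apply hdiff_fh (differentiableAt_const e)]
        simp
      rw [hsw]
      have hevG : (fun z => fderiv ℝ h z e) =ᶠ[nhds y]
          (fun z : Euc n => psiF g N ‖z‖ * (e L) + (z L * z i) * PhiF g N ‖z‖) := by
        filter_upwards [hev] with z hz
        rw [hz, hDdef]
        simp [hedef, EuclideanSpace.inner_single_right]
        ring
      rw [hevG.fderiv_eq]
      have hc : HasFDerivAt (fun z : Euc n => z L * z i)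
          ((y L) • (EuclideanSpace.proj (𝕜 := ℝ) i : Euc n →L[ℝ] ℝ)
            + (y i) • (EuclideanSpace.proj (𝕜 := ℝ) L : Euc n →L[ℝ] ℝ)) y :=
        ((EuclideanSpace.proj (𝕜 := ℝ) L : Euc n →L[ℝ] ℝ).hasFDerivAt (x := y)).mul
          ((EuclideanSpace.proj (𝕜 := ℝ) i : Euc n →L[ℝ] ℝ).hasFDerivAt (x := y))
      have hG : HasFDerivAt (fun z : Euc n => psiF g N ‖z‖ * (e L) + (z L * z i) * PhiF g N ‖z‖) _ y :=
        (ha.mul_const (e L)).add (hc.mul hb)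
      rw [hG.fderiv]
      simp only [ContinuousLinearMap.add_apply, ContinuousLinearMap.smul_apply,
        innerSL_apply_apply, PiLp.proj_apply, smul_eq_mul, hedef,
        EuclideanSpace.inner_single_right, EuclideanSpace.single_apply,
        eq_self_iff_true, if_true, starRingEnd_apply, star_trivial, map_one, mul_one, one_mul]
      rfl
    have hlap : lap n h y = ∑ i : Fin n,
        ((EuclideanSpace.single i (1:ℝ) L) * (P1F g N r * (r⁻¹ * y i))
          + ((y L * y i) * (Phi'F g N r * (r⁻¹ * y i))
            + PhiF g N r * (y L * 1 + y i * (EuclideanSpace.single i (1:ℝ) L)))) :=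
      Finset.sum_congr rfl fun i _ => hterm i
    rw [hlap]
    have hs1 : ∑ i : Fin n, (EuclideanSpace.single i (1:ℝ) L) * y i = y L := by
      simp [EuclideanSpace.single_apply]
    have hs2 : ∑ i : Fin n, y i * y i = r ^ 2 := by
      have h1 : r ^ 2 = ∑ i : Fin n, ‖y i‖ ^ 2 := by
        rw [hrdef, EuclideanSpace.norm_eq, Real.sq_sqrt (by positivity)]
      rw [h1]
      exact Finset.sum_congr rfl fun i _ => by rw [Real.norm_eq_abs, sq_abs, sq]
    have hexp : ∀ i : Fin n,
        (EuclideanSpace.single i (1:ℝ) L) * (P1F g N r * (r⁻¹ * y i))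
          + ((y L * y i) * (Phi'F g N r * (r⁻¹ * y i))
            + PhiF g N r * (y L * 1 + y i * (EuclideanSpace.single i (1:ℝ) L)))
        = (P1F g N r * r⁻¹) * ((EuclideanSpace.single i (1:ℝ) L) * y i)
          + (Phi'F g N r * r⁻¹ * y L) * (y i * y i)
          + PhiF g N r * y L
          + PhiF g N r * ((EuclideanSpace.single i (1:ℝ) L) * y i) := fun i => by ring
    rw [Finset.sum_congr rfl fun i _ => hexp i]
    rw [Finset.sum_add_distrib, Finset.sum_add_distrib, Finset.sum_add_distrib,
      ← Finset.mul_sum, ← Finset.mul_sum, Finset.sum_const, ← Finset.mul_sum,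
      hs1, hs2, Finset.card_univ, Fintype.card_fin, nsmul_eq_mul]
    linear_combination final_alg (g := g) (N := N) (yL := y L) hr
  · -- normal derivative on the boundary
    intro hyL
    rw [hfder y hy, hDdef]
    simp [psiF, hyL, EuclideanSpace.single_apply, EuclideanSpace.inner_single_right]
    rfl
end
end

section
/- Let n ≥ 4 and C₀, Λ, A > 0. There exists a constant C > 0 depending only on n, C₀, Λ and A with the following property. Let Γ ≥ 1, ρ > 0, x ∈ ℝⁿ, and let K ∈ C^{n−2}(cl(B(x,ρ))) satisfy ‖∇ʲK(x)‖ ≤ C₀·‖∇K(x)‖^{(n−2−j)/(n−3)} for j = 1,…,n−2, sup over B(x,ρ) of ‖∇^{n−2}K‖ ≤ Λ, and ‖∇K(x)‖ ≤ A·Γ^{3−n}. Then for all z, w ∈ ℝⁿ with |z| ≤ ρΓ and |w| ≤ ρΓ, |K(x + Γ^{−1}z) − K(x + Γ^{−1}w)| ≤ C·Γ^{2−n}·(1 + max(|z|,|w|))^{n−2}. -/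
open Metric Set

noncomputable section

set_option maxHeartbeats 1000000 in
/-- Taylor estimate from flatness (K1) and the fast vanishing rate
`‖∇K(x)‖ ≤ A·Γ^{3-n}` of the gradient. -/
theorem taylor_estimate_fast_vanishing (n : ℕ) (hn : 4 ≤ n)
    (C₀ Λ A : ℝ) (hC₀ : 0 < C₀) (hΛ : 0 < Λ) (hA : 0 < A) :
    ∃ C : ℝ, 0 < C ∧
      ∀ (Γ : ℝ), 1 ≤ Γ → ∀ (ρ : ℝ), 0 < ρ → ∀ (x : Euc n) (K : Euc n → ℝ),
        ContDiffOn ℝ (n - 2 : ℕ) K (Metric.closedBall x ρ) →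
        (∀ j : ℕ, 1 ≤ j → j ≤ n - 2 →
          ‖iteratedFDerivWithin ℝ j K (Metric.closedBall x ρ) x‖ ≤
            C₀ * ‖iteratedFDerivWithin ℝ 1 K (Metric.closedBall x ρ) x‖ ^
              (((n : ℝ) - 2 - (j : ℝ)) / ((n : ℝ) - 3))) →
        (∀ z ∈ Metric.ball x ρ,
          ‖iteratedFDerivWithin ℝ (n - 2) K (Metric.closedBall x ρ) z‖ ≤ Λ) →
        ‖iteratedFDerivWithin ℝ 1 K (Metric.closedBall x ρ) x‖ ≤ A * Γ ^ ((3 : ℝ) - (n : ℝ)) →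
        ∀ z w : Euc n, ‖z‖ ≤ ρ * Γ → ‖w‖ ≤ ρ * Γ →
          |K (x + Γ⁻¹ • z) - K (x + Γ⁻¹ • w)|
            ≤ C * Γ ^ ((2 : ℝ) - (n : ℝ)) * (1 + max ‖z‖ ‖w‖) ^ (n - 2) := by
  set A' : ℝ := max A 1 with hA'def
  have hA'1 : (1:ℝ) ≤ A' := le_max_right _ _
  have hA'0 : (0:ℝ) < A' := lt_of_lt_of_le one_pos hA'1
  refine ⟨2 * (Λ + (n : ℝ) * (C₀ * A')), by positivity, ?_⟩
  intro Γ hΓ ρ hρ x K hK hflat hΛb hgrad z w hz hw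
  have hΓ0 : (0:ℝ) < Γ := lt_of_lt_of_le one_pos hΓ
  have hn3 : (0:ℝ) < (n:ℝ) - 3 := by
    have : (4:ℝ) ≤ (n:ℝ) := by exact_mod_cast hn
    linarith
  set s : Set (Euc n) := Metric.closedBall x ρ with hsdef
  set m : ℕ := n - 2 with hmdef
  have hm2 : 2 ≤ m := by omega
  have hmcast : (m:ℝ) = (n:ℝ) - 2 := by
    rw [hmdef]; push_cast [Nat.cast_sub (by omega : 2 ≤ n)]; ring
  set r : ℝ := max ‖z‖ ‖w‖ with hrdef
  have hr0 : 0 ≤ r := le_trans (norm_nonneg z) (le_max_left _ _)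
  have h1r : (1:ℝ) ≤ 1 + r := by linarith
  set t : ℝ := min ρ (Γ⁻¹ * (1 + r)) with htdef
  have ht0 : 0 < t := lt_min hρ (by positivity)
  have htρ : t ≤ ρ := min_le_left _ _
  have htβ : t ≤ Γ⁻¹ * (1 + r) := min_le_right _ _
  have hts : Metric.closedBall x t ⊆ s := closedBall_subset_closedBall htρ
  have huniq : UniqueDiffOn ℝ s := uniqueDiffOn_convex (convex_closedBall x ρ)
    (by rw [interior_closedBall x hρ.ne']; exact ⟨x, mem_ball_self hρ⟩)
  have hconv : Convex ℝ (Metric.closedBall x t) := convex_closedBall x t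
  -- membership of the two points
  have hmem : ∀ u : Euc n, ‖u‖ ≤ ρ * Γ → ‖u‖ ≤ r → x + Γ⁻¹ • u ∈ Metric.closedBall x t := by
    intro u hu hur
    have h1 : ‖Γ⁻¹ • u‖ = Γ⁻¹ * ‖u‖ := by
      rw [norm_smul, Real.norm_eq_abs, abs_of_pos (by positivity)]
    rw [mem_closedBall, dist_eq_norm, add_sub_cancel_left, h1]
    refine le_min ?_ ?_
    · calc Γ⁻¹ * ‖u‖ ≤ Γ⁻¹ * (ρ * Γ) := mul_le_mul_of_nonneg_left hu (by positivity)
        _ = ρ := by field_simp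
    · exact mul_le_mul_of_nonneg_left (by linarith) (by positivity)
  -- bound on the derivatives at x from flatness + fast vanishing
  have hD : ∀ j : ℕ, 1 ≤ j → j ≤ m →
      ‖iteratedFDerivWithin ℝ j K s x‖ ≤ C₀ * A' * Γ ^ ((j:ℝ) - ((n:ℝ) - 2)) := by
    intro j hj1 hjm
    set e : ℝ := ((n : ℝ) - 2 - (j : ℝ)) / ((n : ℝ) - 3) with hedef
    have hjn : (j:ℝ) ≤ (n:ℝ) - 2 := by
      have : (j:ℝ) ≤ (m:ℝ) := by exact_mod_cast hjm
      linarith [hmcast]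
    have hj1' : (1:ℝ) ≤ (j:ℝ) := by exact_mod_cast hj1
    have he0 : 0 ≤ e := by
      rw [hedef]
      apply div_nonneg <;> linarith
    have he1 : e ≤ 1 := by
      rw [hedef, div_le_one hn3]; linarith
    have hΓe : ((Γ ^ ((3:ℝ) - (n:ℝ))) ^ e) = Γ ^ ((j:ℝ) - ((n:ℝ) - 2)) := by
      rw [← Real.rpow_mul hΓ0.le]
      congr 1
      rw [hedef]
      field_simp
      ring
    have hAe : A ^ e ≤ A' := by
      calc A ^ e ≤ A' ^ e := Real.rpow_le_rpow hA.le (le_max_left A 1) he0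
        _ ≤ A' ^ (1:ℝ) := Real.rpow_le_rpow_of_exponent_le hA'1 he1
        _ = A' := Real.rpow_one _
    have hΓpos : (0:ℝ) < Γ ^ ((j:ℝ) - ((n:ℝ) - 2)) := Real.rpow_pos_of_pos hΓ0 _
    calc ‖iteratedFDerivWithin ℝ j K s x‖
        ≤ C₀ * ‖iteratedFDerivWithin ℝ 1 K s x‖ ^ e := hflat j hj1 hjm
      _ ≤ C₀ * (A * Γ ^ ((3:ℝ) - (n:ℝ))) ^ e := by
          refine mul_le_mul_of_nonneg_left ?_ hC₀.le
          exact Real.rpow_le_rpow (norm_nonneg _) hgrad he0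
      _ = C₀ * (A ^ e * Γ ^ ((j:ℝ) - ((n:ℝ) - 2))) := by
          rw [Real.mul_rpow hA.le (Real.rpow_nonneg hΓ0.le _), hΓe]
      _ ≤ C₀ * A' * Γ ^ ((j:ℝ) - ((n:ℝ) - 2)) := by
          rw [mul_assoc]
          refine mul_le_mul_of_nonneg_left ?_ hC₀.le
          exact mul_le_mul_of_nonneg_right hAe hΓpos.le
  -- the key inductive estimate
  have key : ∀ i : ℕ, i ≤ m - 1 → ∀ ξ ∈ Metric.closedBall x t,
      ‖iteratedFDerivWithin ℝ (m - i) K s ξ‖ ≤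
        (Λ + (i:ℝ) * (C₀ * A')) * (1 + r) ^ i * Γ ^ (-(i:ℝ)) := by
    intro i
    induction i with
    | zero =>
      intro _ ξ hξ
      simp only [Nat.cast_zero, zero_mul, add_zero, pow_zero, mul_one, neg_zero,
        Real.rpow_zero, Nat.sub_zero]
      have hcont : ContinuousOn (fun ξ => ‖iteratedFDerivWithin ℝ m K s ξ‖) s :=
        (hK.continuousOn_iteratedFDerivWithin le_rfl huniq).norm
      have hξs : ξ ∈ s := hts hξ
      have hclose : ξ ∈ closure (Metric.ball x ρ) := by
        rw [closure_ball x hρ.ne']; exact hξs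
      have hne : (nhdsWithin ξ (Metric.ball x ρ)).NeBot :=
        mem_closure_iff_nhdsWithin_neBot.mp hclose
      have htend : Filter.Tendsto (fun ξ => ‖iteratedFDerivWithin ℝ m K s ξ‖)
          (nhdsWithin ξ (Metric.ball x ρ)) (nhds ‖iteratedFDerivWithin ℝ m K s ξ‖) :=
        ((hcont ξ hξs).mono ball_subset_closedBall)
      exact le_of_tendsto htend (Filter.eventually_iff_exists_mem.mpr
        ⟨Metric.ball x ρ, self_mem_nhdsWithin, fun y hy => hΛb y hy⟩)
    | succ i ih =>
      intro hi ξ hξ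
      push_cast
      have hi' : i ≤ m - 1 := by omega
      have hj1 : 1 ≤ m - (i + 1) := by omega
      have hjm : m - (i+1) ≤ m := by omega
      have hsucc : m - (i+1) + 1 = m - i := by omega
      set g := iteratedFDerivWithin ℝ (m - (i+1)) K s with hgdef
      have hdiff : DifferentiableOn ℝ g s := by
        apply hK.differentiableOn_iteratedFDerivWithin _ huniq
        exact_mod_cast (by omega : m - (i+1) < m)
      have hmv : ‖g ξ - g x‖ ≤
          ((Λ + (i:ℝ) * (C₀ * A')) * (1 + r) ^ i * Γ ^ (-(i:ℝ))) * ‖ξ - x‖ := by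
        refine hconv.norm_image_sub_le_of_norm_hasFDerivWithin_le
          (f' := fun ξ => fderivWithin ℝ g s ξ)
          (fun y hy => ((hdiff y (hts hy)).hasFDerivWithinAt).mono hts)
          (fun y hy => ?_) (mem_closedBall_self (le_of_lt ht0)) hξ
        rw [hgdef, norm_fderivWithin_iteratedFDerivWithin, hsucc]
        exact ih hi' y hy
      have hξx : ‖ξ - x‖ ≤ Γ⁻¹ * (1 + r) := by
        rw [← dist_eq_norm]; exact le_trans (mem_closedBall.mp hξ) htβ
      have hDx : ‖g x‖ ≤ C₀ * A' * Γ ^ (-((i:ℝ)+1)) := by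
        have hbd := hD (m - (i+1)) hj1 hjm
        have hcast : ((m - (i+1) : ℕ) : ℝ) - ((n:ℝ) - 2) = -((i:ℝ)+1) := by
          have h1 : ((m - (i+1) : ℕ) : ℝ) = (m:ℝ) - ((i:ℝ)+1) := by
            push_cast [Nat.cast_sub (by omega : i + 1 ≤ m)]; ring
          rw [h1, hmcast]; ring
        rw [hgdef]
        calc ‖iteratedFDerivWithin ℝ (m - (i+1)) K s x‖
            ≤ C₀ * A' * Γ ^ (((m - (i+1) : ℕ) : ℝ) - ((n:ℝ) - 2)) := hbd
          _ = C₀ * A' * Γ ^ (-((i:ℝ)+1)) := by rw [hcast]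
      have hΓmul : Γ ^ (-(i:ℝ)) * Γ⁻¹ = Γ ^ (-((i:ℝ)+1)) := by
        rw [← Real.rpow_neg_one Γ, ← Real.rpow_add hΓ0]; ring_nf
      have hΓpos : (0:ℝ) < Γ ^ (-((i:ℝ)+1)) := Real.rpow_pos_of_pos hΓ0 _
      have hpow : (1:ℝ) ≤ (1 + r) ^ (i+1) := one_le_pow₀ h1r
      calc ‖g ξ‖ = ‖g x + (g ξ - g x)‖ := by congr 1; abel
        _ ≤ ‖g x‖ + ‖g ξ - g x‖ := norm_add_le _ _
        _ ≤ C₀ * A' * Γ ^ (-((i:ℝ)+1)) +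
            ((Λ + (i:ℝ) * (C₀ * A')) * (1 + r) ^ i * Γ ^ (-(i:ℝ))) * (Γ⁻¹ * (1 + r)) := by
            refine add_le_add hDx (le_trans hmv ?_)
            exact mul_le_mul_of_nonneg_left hξx (by positivity)
        _ = C₀ * A' * Γ ^ (-((i:ℝ)+1)) +
            (Λ + (i:ℝ) * (C₀ * A')) * (1 + r) ^ (i+1) * Γ ^ (-((i:ℝ)+1)) := by
            rw [pow_succ, ← hΓmul]; ring
        _ ≤ (Λ + ((i:ℝ)+1) * (C₀ * A')) * (1 + r) ^ (i+1) * Γ ^ (-((i:ℝ)+1)) := by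
            nlinarith [mul_pos hC₀ hA'0, hΓpos, hpow,
              mul_nonneg (mul_nonneg hC₀.le hA'0.le) hΓpos.le,
              mul_nonneg hr0 (mul_nonneg hC₀.le hA'0.le)]
  -- final mean value step on `K` itself
  have hp : x + Γ⁻¹ • z ∈ Metric.closedBall x t := hmem z hz (le_max_left _ _)
  have hq : x + Γ⁻¹ • w ∈ Metric.closedBall x t := hmem w hw (le_max_right _ _)
  have h1 : m - (m - 1) = 1 := by omega
  set M : ℝ := (Λ + ((m-1 : ℕ):ℝ) * (C₀ * A')) * (1 + r) ^ (m-1) * Γ ^ (-((m-1 : ℕ):ℝ))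
    with hMdef
  have hM0 : 0 ≤ M := by
    rw [hMdef]; positivity
  have hdiff0 : DifferentiableOn ℝ (iteratedFDerivWithin ℝ 0 K s) s := by
    apply hK.differentiableOn_iteratedFDerivWithin _ huniq
    exact_mod_cast (by omega : 0 < m)
  have hmv : ‖iteratedFDerivWithin ℝ 0 K s (x + Γ⁻¹ • z) -
      iteratedFDerivWithin ℝ 0 K s (x + Γ⁻¹ • w)‖ ≤ M * ‖(x + Γ⁻¹ • z) - (x + Γ⁻¹ • w)‖ := by
    refine hconv.norm_image_sub_le_of_norm_hasFDerivWithin_le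
      (f' := fun ξ => fderivWithin ℝ (iteratedFDerivWithin ℝ 0 K s) s ξ)
      (fun y hy => ((hdiff0 y (hts hy)).hasFDerivWithinAt).mono hts)
      (fun y hy => ?_) hq hp
    rw [norm_fderivWithin_iteratedFDerivWithin]
    have := key (m-1) le_rfl y hy
    rw [h1] at this
    exact le_trans this (le_of_eq rfl)
  have hnorm : ‖iteratedFDerivWithin ℝ 0 K s (x + Γ⁻¹ • z) -
      iteratedFDerivWithin ℝ 0 K s (x + Γ⁻¹ • w)‖ = |K (x + Γ⁻¹ • z) - K (x + Γ⁻¹ • w)| := by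
    rw [iteratedFDerivWithin_zero_eq_comp]
    simp only [Function.comp_apply]
    rw [← LinearIsometryEquiv.map_sub, LinearIsometryEquiv.norm_map, Real.norm_eq_abs]
  have hpq : ‖(x + Γ⁻¹ • z) - (x + Γ⁻¹ • w)‖ ≤ Γ⁻¹ * (2 * (1 + r)) := by
    have h2 : (x + Γ⁻¹ • z) - (x + Γ⁻¹ • w) = Γ⁻¹ • (z - w) := by
      rw [smul_sub]; abel
    rw [h2, norm_smul, Real.norm_eq_abs, abs_of_pos (by positivity : (0:ℝ) < Γ⁻¹)]
    refine mul_le_mul_of_nonneg_left ?_ (by positivity)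
    calc ‖z - w‖ ≤ ‖z‖ + ‖w‖ := norm_sub_le _ _
      _ ≤ r + r := add_le_add (le_max_left _ _) (le_max_right _ _)
      _ ≤ 2 * (1 + r) := by linarith
  have hm1cast : ((m-1 : ℕ):ℝ) = (n:ℝ) - 3 := by
    push_cast [Nat.cast_sub (by omega : 1 ≤ m), hmcast]; ring
  have hΓfin : Γ ^ (-((m-1 : ℕ):ℝ)) * Γ⁻¹ = Γ ^ ((2:ℝ) - (n:ℝ)) := by
    rw [← Real.rpow_neg_one Γ, ← Real.rpow_add hΓ0, hm1cast]; ring_nf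
  have hcoef : (Λ + ((m-1 : ℕ):ℝ) * (C₀ * A')) ≤ Λ + (n:ℝ) * (C₀ * A') := by
    have : ((m-1 : ℕ):ℝ) ≤ (n:ℝ) := by
      rw [hm1cast]; linarith
    nlinarith [mul_pos hC₀ hA'0]
  have hΓ2n : (0:ℝ) < Γ ^ ((2:ℝ) - (n:ℝ)) := Real.rpow_pos_of_pos hΓ0 _
  calc |K (x + Γ⁻¹ • z) - K (x + Γ⁻¹ • w)|
      ≤ M * (Γ⁻¹ * (2 * (1 + r))) := by
        rw [← hnorm]
        exact le_trans hmv (mul_le_mul_of_nonneg_left hpq hM0)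
    _ = 2 * (Λ + ((m-1 : ℕ):ℝ) * (C₀ * A')) * Γ ^ ((2:ℝ) - (n:ℝ)) * (1 + r) ^ m := by
        rw [hMdef, ← hΓfin]
        have : (1 + r) ^ (m-1) * (1 + r) = (1 + r) ^ m := by
          rw [← pow_succ]; congr 1; omega
        rw [← this]; ring
    _ ≤ 2 * (Λ + (n:ℝ) * (C₀ * A')) * Γ ^ ((2:ℝ) - (n:ℝ)) * (1 + r) ^ m := by
        have hpm : (0:ℝ) ≤ (1 + r) ^ m := by positivity
        nlinarith [mul_le_mul_of_nonneg_right hcoef hΓ2n.le]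
end
end

section
/- Let n ≥ 4 and C₀, Λ > 0. There exists a constant C > 0 depending only on n, C₀ and Λ with the following property. Let Γ ≥ 1, ρ > 0, x ∈ ℝⁿ, and let K ∈ C^{n−2}(cl(B(x,ρ))) with δ := ‖∇K(x)‖ > 0, satisfying ‖∇ʲK(x)‖ ≤ C₀·δ^{(n−2−j)/(n−3)} for j = 1,…,n−2 and sup over B(x,ρ) of ‖∇^{n−2}K‖ ≤ Λ. Set ℓ = δ^{1/(n−3)}·Γ. Then for all z, w ∈ ℝⁿ with |z| ≤ ρΓ and |w| ≤ ρΓ, |K(x + Γ^{−1}z) − K(x + Γ^{−1}w)| ≤ C·Γ^{−1}·δ·|z − w|·Σ_{j=0}^{n−3} ℓ^{−j}·max(1,|z|,|w|)^j. -/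
open Metric Set

noncomputable section

set_option maxHeartbeats 1000000

private lemma taylor_aux {N : ℕ} (x : Euc N) (ρ : ℝ) (hρ : 0 < ρ) :
    ∀ (m : ℕ) {F : Type} [NormedAddCommGroup F] [NormedSpace ℝ F]
      (f : Euc N → F), ContDiffOn ℝ m f (closedBall x ρ) →
    ∀ (Λ' : ℝ),
      (∀ y ∈ closedBall x ρ, ‖iteratedFDerivWithin ℝ m f (closedBall x ρ) y‖ ≤ Λ') →
    ∀ r : ℝ, 0 ≤ r → r ≤ ρ → ∀ y ∈ closedBall x r,
      ‖f y‖ ≤ (∑ j ∈ Finset.range m,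
          ‖iteratedFDerivWithin ℝ j f (closedBall x ρ) x‖ * r ^ j) + Λ' * r ^ m := by
  intro m
  induction m with
  | zero =>
      intro F _ _ f hf Λ' hΛ' r hr hrρ y hy
      simp only [Finset.range_zero, Finset.sum_empty, pow_zero, mul_one, zero_add]
      have hyB : y ∈ closedBall x ρ := closedBall_subset_closedBall hrρ hy
      simpa [norm_iteratedFDerivWithin_zero] using hΛ' y hyB
  | succ m ih =>
      intro F _ _ f hf Λ' hΛ' r hr hrρ y hy
      have hU : UniqueDiffOn ℝ (closedBall x ρ) :=
        uniqueDiffOn_convex (convex_closedBall x ρ)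
          (by rw [interior_closedBall x hρ.ne']; exact nonempty_ball.2 hρ)
      have hsub : closedBall x r ⊆ closedBall x ρ := closedBall_subset_closedBall hrρ
      have hxρ : x ∈ closedBall x ρ := mem_closedBall_self hρ.le
      have hxr : x ∈ closedBall x r := mem_closedBall_self hr
      have hfd : DifferentiableOn ℝ f (closedBall x ρ) :=
        hf.differentiableOn (by simp)
      have hg : ContDiffOn ℝ m (fderivWithin ℝ f (closedBall x ρ)) (closedBall x ρ) :=
        hf.fderivWithin hU (by exact_mod_cast le_rfl)
      have hgtop : ∀ u ∈ closedBall x ρ,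
          ‖iteratedFDerivWithin ℝ m (fderivWithin ℝ f (closedBall x ρ))
            (closedBall x ρ) u‖ ≤ Λ' := by
        intro u hu
        rw [norm_iteratedFDerivWithin_fderivWithin hU hu]
        exact hΛ' u hu
      have hgb := ih (fderivWithin ℝ f (closedBall x ρ)) hg Λ' hgtop r hr hrρ
      set Cs := (∑ j ∈ Finset.range m,
          ‖iteratedFDerivWithin ℝ (j + 1) f (closedBall x ρ) x‖ * r ^ j) + Λ' * r ^ m with hCs
      have hgb' : ∀ u ∈ closedBall x r, ‖fderivWithin ℝ f (closedBall x ρ) u‖ ≤ Cs := by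
        intro u hu
        refine (hgb u hu).trans_eq ?_
        rw [hCs]
        congr 1
        exact Finset.sum_congr rfl fun j _ => by
          rw [norm_iteratedFDerivWithin_fderivWithin hU hxρ]
      have hΛ'0 : 0 ≤ Λ' := le_trans (norm_nonneg _) (hΛ' x hxρ)
      have hCs0 : 0 ≤ Cs :=
        add_nonneg (Finset.sum_nonneg fun j _ =>
          mul_nonneg (norm_nonneg _) (pow_nonneg hr j)) (mul_nonneg hΛ'0 (pow_nonneg hr m))
      have hmvt : ‖f y - f x‖ ≤ Cs * ‖y - x‖ :=
        Convex.norm_image_sub_le_of_norm_hasFDerivWithin_le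
          (fun u hu => ((hfd u (hsub hu)).hasFDerivWithinAt).mono hsub)
          hgb' (convex_closedBall x r) hxr hy
      have hyx : ‖y - x‖ ≤ r := by rw [← dist_eq_norm]; exact mem_closedBall.mp hy
      have h1 : ‖f y‖ ≤ ‖f x‖ + Cs * r := by
        have h2 : ‖f y‖ ≤ ‖f x‖ + ‖f y - f x‖ := by
          calc ‖f y‖ = ‖f x + (f y - f x)‖ := by congr 1; abel
          _ ≤ ‖f x‖ + ‖f y - f x‖ := norm_add_le _ _
        have h3 : Cs * ‖y - x‖ ≤ Cs * r := mul_le_mul_of_nonneg_left hyx hCs0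
        linarith
      have h4 : (∑ j ∈ Finset.range (m + 1),
            ‖iteratedFDerivWithin ℝ j f (closedBall x ρ) x‖ * r ^ j) + Λ' * r ^ (m + 1)
          = ‖f x‖ + Cs * r := by
        rw [Finset.sum_range_succ'
          (fun j => ‖iteratedFDerivWithin ℝ j f (closedBall x ρ) x‖ * r ^ j) m]
        rw [hCs, norm_iteratedFDerivWithin_zero]
        rw [add_mul, Finset.sum_mul]
        simp only [pow_zero, mul_one, pow_succ, mul_assoc]
        ring
      rw [h4]
      exact h1

/-- Taylor estimate from flatness (K1) at a point where the gradient has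
size `δ`, with the scale `ℓ = δ^{1/(n-3)}·Γ`. -/
theorem taylor_estimate_flatness (n : ℕ) (hn : 4 ≤ n)
    (C₀ Λ : ℝ) (hC₀ : 0 < C₀) (hΛ : 0 < Λ) :
    ∃ C : ℝ, 0 < C ∧
      ∀ (Γ : ℝ), 1 ≤ Γ → ∀ (ρ : ℝ), 0 < ρ → ∀ (x : Euc n) (K : Euc n → ℝ) (δ ℓ : ℝ),
        δ = ‖iteratedFDerivWithin ℝ 1 K (Metric.closedBall x ρ) x‖ →
        0 < δ →
        ℓ = δ ^ ((1 : ℝ) / ((n : ℝ) - 3)) * Γ →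
        ContDiffOn ℝ (n - 2 : ℕ) K (Metric.closedBall x ρ) →
        (∀ j : ℕ, 1 ≤ j → j ≤ n - 2 →
          ‖iteratedFDerivWithin ℝ j K (Metric.closedBall x ρ) x‖ ≤
            C₀ * δ ^ (((n : ℝ) - 2 - (j : ℝ)) / ((n : ℝ) - 3))) →
        (∀ z ∈ Metric.ball x ρ,
          ‖iteratedFDerivWithin ℝ (n - 2) K (Metric.closedBall x ρ) z‖ ≤ Λ) →
        ∀ z w : Euc n, ‖z‖ ≤ ρ * Γ → ‖w‖ ≤ ρ * Γ →
          |K (x + Γ⁻¹ • z) - K (x + Γ⁻¹ • w)|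
            ≤ C * Γ⁻¹ * δ * ‖z - w‖ *
                ∑ j ∈ Finset.range (n - 2), ℓ ^ (-(j : ℝ)) * max 1 (max ‖z‖ ‖w‖) ^ j := by
  refine ⟨max C₀ Λ, lt_of_lt_of_le hC₀ (le_max_left _ _), ?_⟩
  intro Γ hΓ ρ hρ x K δ ℓ hδdef hδ hℓ hK hflat hlam z w hz hw
  have hΓ0 : (0 : ℝ) < Γ := lt_of_lt_of_le one_pos hΓ
  have hΓinv : (0 : ℝ) ≤ Γ⁻¹ := (inv_pos.2 hΓ0).le
  have hU : UniqueDiffOn ℝ (closedBall x ρ) :=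
    uniqueDiffOn_convex (convex_closedBall x ρ)
      (by rw [interior_closedBall x hρ.ne']; exact nonempty_ball.2 hρ)
  have hn4 : (4 : ℝ) ≤ (n : ℝ) := by exact_mod_cast hn
  have hn3 : (1 : ℝ) ≤ (n : ℝ) - 3 := by linarith
  have hn3ne : ((n : ℝ) - 3) ≠ 0 := by linarith
  have hm : n - 3 + 1 = n - 2 := by omega
  set m0 := max ‖z‖ ‖w‖ with hm0def
  set M := max 1 m0 with hMdef
  have hm00 : 0 ≤ m0 := le_trans (norm_nonneg z) (le_max_left _ _)
  have hM1 : (1 : ℝ) ≤ M := le_max_left _ _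
  have hM0 : (0 : ℝ) ≤ M := zero_le_one.trans hM1
  have hm0M : m0 ≤ M := le_max_right _ _
  set r := Γ⁻¹ * m0 with hrdef
  have hr0 : 0 ≤ r := mul_nonneg hΓinv hm00
  have hrρ : r ≤ ρ := by
    have h1 : m0 ≤ ρ * Γ := max_le hz hw
    have h2 : r ≤ Γ⁻¹ * (ρ * Γ) := mul_le_mul_of_nonneg_left h1 hΓinv
    have h3 : Γ⁻¹ * (ρ * Γ) = ρ := by field_simp
    linarith [h2, h3.le]
  -- extend the Λ bound to the closed ball
  have hlam' : ∀ y ∈ closedBall x ρ,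
      ‖iteratedFDerivWithin ℝ (n - 2) K (closedBall x ρ) y‖ ≤ Λ := by
    intro y hy
    have hcont : ContinuousOn
        (fun u => ‖iteratedFDerivWithin ℝ (n - 2) K (closedBall x ρ) u‖) (closedBall x ρ) :=
      (hK.continuousOn_iteratedFDerivWithin le_rfl hU).norm
    have hyc : y ∈ closure (ball x ρ) := by rwa [closure_ball x hρ.ne']
    haveI : (nhdsWithin y (ball x ρ)).NeBot := mem_closure_iff_nhdsWithin_neBot.mp hyc
    refine le_of_tendsto ((hcont y hy).mono ball_subset_closedBall) ?_
    filter_upwards [self_mem_nhdsWithin] with u hu using hlam u hu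
  have hxB : x ∈ closedBall x ρ := mem_closedBall_self hρ.le
  have hle : ((n - 3 : ℕ) : WithTop ℕ∞) + 1 ≤ ((n - 2 : ℕ) : WithTop ℕ∞) := by
    exact_mod_cast Nat.le_of_eq hm
  have hg : ContDiffOn ℝ (n - 3 : ℕ) (fderivWithin ℝ K (closedBall x ρ)) (closedBall x ρ) :=
    hK.fderivWithin hU hle
  have hgtop : ∀ u ∈ closedBall x ρ,
      ‖iteratedFDerivWithin ℝ (n - 3) (fderivWithin ℝ K (closedBall x ρ))
        (closedBall x ρ) u‖ ≤ Λ := by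
    intro u hu
    rw [norm_iteratedFDerivWithin_fderivWithin hU hu, hm]
    exact hlam' u hu
  have htaylor := taylor_aux x ρ hρ (n - 3) (fderivWithin ℝ K (closedBall x ρ)) hg Λ hgtop r hr0 hrρ
  set Cs := (∑ j ∈ Finset.range (n - 3),
      ‖iteratedFDerivWithin ℝ (j + 1) K (closedBall x ρ) x‖ * r ^ j) + Λ * r ^ (n - 3) with hCsdef
  have hgb : ∀ u ∈ closedBall x r, ‖fderivWithin ℝ K (closedBall x ρ) u‖ ≤ Cs := by
    intro u hu
    refine (htaylor u hu).trans_eq ?_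
    rw [hCsdef]
    congr 1
    exact Finset.sum_congr rfl fun j _ => by
      rw [norm_iteratedFDerivWithin_fderivWithin hU hxB]
  -- mean value theorem
  have hsub : closedBall x r ⊆ closedBall x ρ := closedBall_subset_closedBall hrρ
  have hKd : DifferentiableOn ℝ K (closedBall x ρ) :=
    hK.differentiableOn (by exact_mod_cast (by omega : n - 2 ≠ 0))
  have hmem : ∀ v : Euc n, ‖v‖ ≤ m0 → x + Γ⁻¹ • v ∈ closedBall x r := by
    intro v hv
    rw [mem_closedBall, dist_eq_norm]
    have : x + Γ⁻¹ • v - x = Γ⁻¹ • v := by abel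
    rw [this, norm_smul, norm_inv, Real.norm_eq_abs, abs_of_pos hΓ0, hrdef]
    exact mul_le_mul_of_nonneg_left hv hΓinv
  have haR : x + Γ⁻¹ • z ∈ closedBall x r := hmem z (le_max_left _ _)
  have hbR : x + Γ⁻¹ • w ∈ closedBall x r := hmem w (le_max_right _ _)
  have hmvt : ‖K (x + Γ⁻¹ • z) - K (x + Γ⁻¹ • w)‖
      ≤ Cs * ‖(x + Γ⁻¹ • z) - (x + Γ⁻¹ • w)‖ :=
    Convex.norm_image_sub_le_of_norm_hasFDerivWithin_le
      (fun u hu => ((hKd u (hsub hu)).hasFDerivWithinAt).mono hsub)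
      hgb (convex_closedBall x r) hbR haR
  have hdiff : ‖(x + Γ⁻¹ • z) - (x + Γ⁻¹ • w)‖ = Γ⁻¹ * ‖z - w‖ := by
    have h1 : (x + Γ⁻¹ • z) - (x + Γ⁻¹ • w) = Γ⁻¹ • (z - w) := by
      rw [smul_sub]; abel
    rw [h1, norm_smul, norm_inv, Real.norm_eq_abs, abs_of_pos hΓ0]
  -- key power identity
  have hℓ0 : (0 : ℝ) < ℓ := by
    rw [hℓ]
    exact mul_pos (Real.rpow_pos_of_pos hδ _) hΓ0
  have key : ∀ j : ℕ,
      δ ^ (((n : ℝ) - 3 - (j : ℝ)) / ((n : ℝ) - 3)) * (Γ⁻¹) ^ j = δ * ℓ ^ (-(j : ℝ)) := by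
    intro j
    have e1 : ((n : ℝ) - 3 - (j : ℝ)) / ((n : ℝ) - 3)
        = 1 + (1 / ((n : ℝ) - 3)) * (-(j : ℝ)) := by
      field_simp
      ring
    rw [e1, Real.rpow_add hδ, Real.rpow_one, hℓ,
      Real.mul_rpow (Real.rpow_nonneg hδ.le _) hΓ0.le,
      ← Real.rpow_mul hδ.le,
      Real.rpow_neg hΓ0.le, Real.rpow_natCast, ← inv_pow]
    ring
  -- bound Cs
  have hCsle : Cs ≤ max C₀ Λ * δ * ∑ j ∈ Finset.range (n - 2), ℓ ^ (-(j : ℝ)) * M ^ j := by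
    have hrM : r ≤ Γ⁻¹ * M := mul_le_mul_of_nonneg_left hm0M hΓinv
    have hterm : ∀ j : ℕ, r ^ j ≤ (Γ⁻¹) ^ j * M ^ j := by
      intro j
      calc r ^ j ≤ (Γ⁻¹ * M) ^ j := pow_le_pow_left₀ hr0 hrM j
      _ = (Γ⁻¹) ^ j * M ^ j := mul_pow _ _ _
    rw [← hm, Finset.sum_range_succ, mul_add]
    rw [hCsdef]
    refine add_le_add ?_ ?_
    · rw [Finset.mul_sum]
      refine Finset.sum_le_sum fun j hj => ?_
      have hj' : j < n - 3 := Finset.mem_range.mp hj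
      have hb := hflat (j + 1) (by omega) (by omega)
      have hcast : (n : ℝ) - 2 - ((j + 1 : ℕ) : ℝ) = (n : ℝ) - 3 - (j : ℝ) := by
        push_cast; ring
      rw [hcast] at hb
      have hrpow0 : (0 : ℝ) ≤ δ ^ (((n : ℝ) - 3 - (j : ℝ)) / ((n : ℝ) - 3)) :=
        Real.rpow_nonneg hδ.le _
      calc ‖iteratedFDerivWithin ℝ (j + 1) K (closedBall x ρ) x‖ * r ^ j
          ≤ (C₀ * δ ^ (((n : ℝ) - 3 - (j : ℝ)) / ((n : ℝ) - 3))) * ((Γ⁻¹) ^ j * M ^ j) := by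
            refine mul_le_mul hb (hterm j) (pow_nonneg hr0 j)
              (mul_nonneg hC₀.le hrpow0)
      _ = C₀ * ((δ ^ (((n : ℝ) - 3 - (j : ℝ)) / ((n : ℝ) - 3)) * (Γ⁻¹) ^ j) * M ^ j) := by
            ring
      _ = C₀ * ((δ * ℓ ^ (-(j : ℝ))) * M ^ j) := by rw [key j]
      _ ≤ max C₀ Λ * ((δ * ℓ ^ (-(j : ℝ))) * M ^ j) := by
            refine mul_le_mul_of_nonneg_right (le_max_left _ _) ?_
            positivity
      _ = max C₀ Λ * δ * (ℓ ^ (-(j : ℝ)) * M ^ j) := by ring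
    · have hc3 : ((n - 3 : ℕ) : ℝ) = (n : ℝ) - 3 := by
        push_cast [Nat.cast_sub (by omega : 3 ≤ n)]; ring
      have hkey3 : (Γ⁻¹) ^ (n - 3) = δ * ℓ ^ (-((n - 3 : ℕ) : ℝ)) := by
        have h := key (n - 3)
        nth_rewrite 1 [hc3] at h
        rw [sub_self, zero_div, Real.rpow_zero, one_mul] at h
        exact h
      calc Λ * r ^ (n - 3) ≤ Λ * ((Γ⁻¹) ^ (n - 3) * M ^ (n - 3)) := by
            exact mul_le_mul_of_nonneg_left (hterm (n - 3)) hΛ.le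
      _ = Λ * ((δ * ℓ ^ (-((n - 3 : ℕ) : ℝ))) * M ^ (n - 3)) := by rw [hkey3]
      _ ≤ max C₀ Λ * ((δ * ℓ ^ (-((n - 3 : ℕ) : ℝ))) * M ^ (n - 3)) := by
            refine mul_le_mul_of_nonneg_right (le_max_right _ _) ?_
            positivity
      _ = max C₀ Λ * δ * (ℓ ^ (-((n - 3 : ℕ) : ℝ)) * M ^ (n - 3)) := by ring
  -- conclusion
  have hS0 : (0 : ℝ) ≤ ∑ j ∈ Finset.range (n - 2), ℓ ^ (-(j : ℝ)) * M ^ j := by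
    refine Finset.sum_nonneg fun j _ => ?_
    positivity
  calc |K (x + Γ⁻¹ • z) - K (x + Γ⁻¹ • w)|
      = ‖K (x + Γ⁻¹ • z) - K (x + Γ⁻¹ • w)‖ := (Real.norm_eq_abs _).symm
    _ ≤ Cs * (Γ⁻¹ * ‖z - w‖) := by rw [← hdiff]; exact hmvt
    _ ≤ (max C₀ Λ * δ * ∑ j ∈ Finset.range (n - 2), ℓ ^ (-(j : ℝ)) * M ^ j)
          * (Γ⁻¹ * ‖z - w‖) := by
        refine mul_le_mul_of_nonneg_right hCsle ?_
        positivity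
    _ = max C₀ Λ * Γ⁻¹ * δ * ‖z - w‖ *
          ∑ j ∈ Finset.range (n - 2), ℓ ^ (-(j : ℝ)) * M ^ j := by ring
end
end

section
/- Let n ≥ 2. There exist constants C₁, C₂ > 0 depending only on n with the following property. Let δ > 0, r > 0, x ∈ ℝⁿ, e = (1,0,…,0), and let K : B(x,r) → ℝ be continuously differentiable with ‖∇K(z) − δ·e‖ ≤ δ/4 for all z ∈ B(x,r). Let Γ ≥ 1, R ≥ 1, λ ∈ [R, R+2], and define H(y) = K(x + Γ^{−1}(y − Re)) wherever this is defined. Then for every y with |y| ≥ λ such that both x + Γ^{−1}(y − Re) and x + Γ^{−1}(y^λ − Re) lie in B(x,r), where y^λ = λ²y/|y|²: (i) |H(y^λ) − H(y)| ≤ C₂·Γ^{−1}·δ·(|y| − λ); and (ii) if moreover |y| ≤ 2λ and y₁ > 2·|(y₂,…,yₙ)|, then H(y^λ) − H(y) ≤ −C₁·Γ^{−1}·δ·(|y| − λ). -/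
open Metric Set

noncomputable section

/-- Euclidean norm of the last `n - 1` coordinates `|(y₂, …, yₙ)|`. -/
def tailNorm (n : ℕ) (h0 : 0 < n) (y : Euc n) : ℝ :=
  Real.sqrt (∑ i ∈ Finset.univ.erase (⟨0, h0⟩ : Fin n), (y i) ^ 2)

lemma scd_aux_m (s lam m : ℝ) (hs : 0 < s) (hlam : 0 ≤ lam) (hls : lam ≤ s)
    (h1 : m * s = s ^ 2 - lam ^ 2) :
    s - lam ≤ m ∧ m ≤ 2 * (s - lam) := by
  constructor <;>
    nlinarith [sq_nonneg (s - lam), mul_nonneg hlam (sub_nonneg.mpr hls)]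

lemma scd_aux_t (s t T : ℝ) (hT : 0 ≤ T) (h : 2 * T < t) (hsq : s ^ 2 = t ^ 2 + T ^ 2)
    (hs : 0 < s) : 4 * s ≤ 5 * t := by
  nlinarith [sq_nonneg (2 * T - t), mul_pos hs hs, mul_nonneg hT hT]

lemma scd_aux_i (D gi δ c t s lam m : ℝ) (hgi : 0 < gi) (hδ : 0 < δ)
    (hc1 : c ≤ 1) (hm : m = (1 - c) * s) (hts : |t| ≤ s)
    (hm2 : m ≤ 2 * (s - lam)) (hm0 : 0 ≤ m) (hd0 : 0 ≤ s - lam)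
    (habs : |D - gi * ((c - 1) * (δ * t))| ≤ δ / 4 * (gi * m)) :
    |D| ≤ 3 * gi * δ * (s - lam) := by
  set P : ℝ := gi * ((c - 1) * (δ * t)) with hP
  have hPb : |P| ≤ gi * δ * m := by
    have h1 : |P| = gi * ((1 - c) * (δ * |t|)) := by
      rw [hP, abs_mul, abs_mul, abs_mul, abs_of_pos hgi, abs_of_pos hδ,
        abs_of_nonpos (by linarith : c - 1 ≤ 0)]
      ring
    have h2 : (1 - c) * |t| ≤ (1 - c) * s :=
      mul_le_mul_of_nonneg_left hts (by linarith)
    subst hm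
    rw [h1]
    have h3 := mul_le_mul_of_nonneg_left h2 (mul_nonneg hgi.le hδ.le)
    nlinarith [h3]
  have htri : |D| ≤ |D - P| + |P| := by
    calc |D| = |(D - P) + P| := by ring_nf
      _ ≤ |D - P| + |P| := abs_add_le _ _
  have hmm : gi * δ * m ≤ gi * δ * (2 * (s - lam)) :=
    mul_le_mul_of_nonneg_left hm2 (by positivity)
  nlinarith [hmm, htri, hPb, habs, mul_nonneg (mul_nonneg hgi.le hδ.le) hd0]

lemma scd_aux_ii (D gi δ c t s lam m : ℝ) (hgi : 0 < gi) (hδ : 0 < δ) (hc1 : c ≤ 1)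
    (hm : m = (1 - c) * s) (ht45 : 4 * s ≤ 5 * t) (hs0 : 0 < s)
    (hm1 : s - lam ≤ m) (hm0 : 0 ≤ m)
    (hub : D ≤ gi * ((c - 1) * (δ * t)) + δ / 4 * (gi * m)) :
    D ≤ -(1 / 4) * gi * δ * (s - lam) := by
  have h1 : (c - 1) * (δ * t) ≤ (c - 1) * (δ * (4 / 5 * s)) := by
    apply mul_le_mul_of_nonpos_left _ (by linarith : c - 1 ≤ 0)
    apply mul_le_mul_of_nonneg_left (by linarith) hδ.le
  have h2 : (c - 1) * (δ * (4 / 5 * s)) = -(4 / 5 * δ * m) := by rw [hm]; ring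
  have h3 : gi * ((c - 1) * (δ * t)) ≤ gi * (-(4 / 5 * δ * m)) := by
    rw [← h2]; exact mul_le_mul_of_nonneg_left h1 hgi.le
  have h6 : gi * δ * ((1 / 4 : ℝ) * (s - lam)) ≤ gi * δ * ((4 / 5 - 1 / 4) * m) := by
    apply mul_le_mul_of_nonneg_left _ (by positivity)
    nlinarith
  nlinarith

/-- the scalar-curvature difference estimate when `∇K ≈ δ·e` near the
blow-up point. -/
theorem scalar_curvature_difference_estimate (n : ℕ) (hn : 2 ≤ n) (h0 : 0 < n) :
    ∃ C₁ : ℝ, 0 < C₁ ∧ ∃ C₂ : ℝ, 0 < C₂ ∧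
      ∀ (δ r : ℝ), 0 < δ → 0 < r → ∀ (x : Euc n) (K : Euc n → ℝ),
        ContDiffOn ℝ 1 K (Metric.ball x r) →
        (∀ z ∈ Metric.ball x r,
          ‖gradient K z - δ • EuclideanSpace.single (⟨0, h0⟩ : Fin n) (1 : ℝ)‖ ≤ δ / 4) →
        ∀ (Γ R lam : ℝ), 1 ≤ Γ → 1 ≤ R → lam ∈ Set.Icc R (R + 2) →
        ∀ y : Euc n, lam ≤ ‖y‖ →
          x + Γ⁻¹ • (y - R • EuclideanSpace.single (⟨0, h0⟩ : Fin n) (1 : ℝ)) ∈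
            Metric.ball x r →
          x + Γ⁻¹ • (invPt lam y - R • EuclideanSpace.single (⟨0, h0⟩ : Fin n) (1 : ℝ)) ∈
            Metric.ball x r →
          (|K (x + Γ⁻¹ • (invPt lam y - R • EuclideanSpace.single (⟨0, h0⟩ : Fin n) (1 : ℝ)))
              - K (x + Γ⁻¹ • (y - R • EuclideanSpace.single (⟨0, h0⟩ : Fin n) (1 : ℝ)))|
            ≤ C₂ * Γ⁻¹ * δ * (‖y‖ - lam)) ∧
          (‖y‖ ≤ 2 * lam → 2 * tailNorm n h0 y < y (⟨0, h0⟩ : Fin n) →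
            K (x + Γ⁻¹ • (invPt lam y - R • EuclideanSpace.single (⟨0, h0⟩ : Fin n) (1 : ℝ)))
                - K (x + Γ⁻¹ • (y - R • EuclideanSpace.single (⟨0, h0⟩ : Fin n) (1 : ℝ)))
              ≤ -C₁ * Γ⁻¹ * δ * (‖y‖ - lam)) := by
  refine ⟨1/4, by norm_num, 3, by norm_num, ?_⟩
  intro δ r hδ hr x K hK hgrad Γ R lam hΓ hR hlamIcc y hy ha hb
  set i0 : Fin n := ⟨0, h0⟩ with hi0
  set e : Euc n := EuclideanSpace.single i0 (1:ℝ) with he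
  set g : Euc n := δ • e with hg
  set φ := (InnerProductSpace.toDual ℝ (Euc n)) g with hφ
  have hΓ0 : (0:ℝ) < Γ := lt_of_lt_of_le one_pos hΓ
  have hΓi : (0:ℝ) < Γ⁻¹ := inv_pos.mpr hΓ0
  have hlam1 : (1:ℝ) ≤ lam := le_trans hR hlamIcc.1
  have hs1 : (1:ℝ) ≤ ‖y‖ := le_trans hlam1 hy
  have hs0 : (0:ℝ) < ‖y‖ := lt_of_lt_of_le one_pos hs1
  -- mean value inequality
  have hfderiv : ∀ z ∈ Metric.ball x r,
      HasFDerivWithinAt K (fderiv ℝ K z) (Metric.ball x r) z := by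
    intro z hz
    exact (((hK.differentiableOn one_ne_zero).differentiableAt
      (isOpen_ball.mem_nhds hz)).hasFDerivAt).hasFDerivWithinAt
  have hbound : ∀ z ∈ Metric.ball x r, ‖fderiv ℝ K z - φ‖ ≤ δ / 4 := by
    intro z hz
    have h1 : fderiv ℝ K z = (InnerProductSpace.toDual ℝ (Euc n)) (gradient K z) := by
      rw [gradient, LinearIsometryEquiv.apply_symm_apply]
    rw [h1, hφ, ← map_sub]
    rw [LinearIsometryEquiv.norm_map]
    exact hgrad z hz
  have hmvt := (convex_ball x r).norm_image_sub_le_of_norm_hasFDerivWithin_le'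
    hfderiv hbound ha hb
  -- algebraic preliminaries
  set c : ℝ := lam ^ 2 / ‖y‖ ^ 2 with hc
  have hc1 : c ≤ 1 := by
    rw [hc, div_le_one (by positivity)]
    exact pow_le_pow_left₀ (le_trans zero_le_one hlam1) hy 2
  have hc0 : 0 < c := by positivity
  have hdiff : (x + Γ⁻¹ • (invPt lam y - R • e)) - (x + Γ⁻¹ • (y - R • e))
      = Γ⁻¹ • ((c - 1) • y) := by
    have hinv : invPt lam y = c • y := rfl
    rw [hinv]; module
  have hφv : ∀ v : Euc n, φ v = δ * v i0 := by
    intro v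
    rw [hφ, InnerProductSpace.toDual_apply_apply, hg, real_inner_smul_left, he,
      EuclideanSpace.inner_single_left]
    simp
  set t : ℝ := y i0 with htdef
  have hφba : φ ((x + Γ⁻¹ • (invPt lam y - R • e)) - (x + Γ⁻¹ • (y - R • e)))
      = Γ⁻¹ * ((c - 1) * (δ * t)) := by
    rw [hdiff, map_smul, map_smul, hφv]
    simp [smul_eq_mul, htdef]
  have hnba : ‖(x + Γ⁻¹ • (invPt lam y - R • e)) - (x + Γ⁻¹ • (y - R • e))‖
      = Γ⁻¹ * ((1 - c) * ‖y‖) := by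
    rw [hdiff, norm_smul, norm_smul, Real.norm_eq_abs, Real.norm_eq_abs,
      abs_of_pos hΓi, abs_of_nonpos (by linarith : c - 1 ≤ 0)]
    ring_nf
  rw [hφba, hnba, Real.norm_eq_abs] at hmvt
  -- scalar abbreviations
  set D : ℝ := K (x + Γ⁻¹ • (invPt lam y - R • e)) - K (x + Γ⁻¹ • (y - R • e)) with hD
  set m : ℝ := (1 - c) * ‖y‖ with hm
  have hm0 : 0 ≤ m := mul_nonneg (by linarith) hs0.le
  have h1body : m * ‖y‖ = ‖y‖ ^ 2 - lam ^ 2 := by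
    rw [hm, hc]; field_simp
  obtain ⟨hmu1, hmu2⟩ := scd_aux_m ‖y‖ lam m hs0 (by linarith) hy h1body
  have hts : |t| ≤ ‖y‖ := by
    have h1 : t = inner ℝ e y := by
      rw [htdef, he, EuclideanSpace.inner_single_left]; simp
    have h2 : ‖e‖ = 1 := by rw [he, EuclideanSpace.norm_single]; simp
    calc |t| = |(inner ℝ e y : ℝ)| := by rw [h1]
      _ ≤ ‖e‖ * ‖y‖ := abs_real_inner_le_norm e y
      _ = ‖y‖ := by rw [h2, one_mul]
  constructor
  · -- part (i)
    exact scd_aux_i D Γ⁻¹ δ c t ‖y‖ lam m hΓi hδ hc1 hm hts hmu2 hm0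
      (by linarith) hmvt
  · -- part (ii)
    intro _h2lam htail
    have hT0 : 0 ≤ tailNorm n h0 y := Real.sqrt_nonneg _
    have hsq : ‖y‖ ^ 2 = t ^ 2 + (tailNorm n h0 y) ^ 2 := by
      have h1 : ‖y‖ ^ 2 = ∑ i, (y i) ^ 2 := by
        rw [EuclideanSpace.norm_eq, Real.sq_sqrt (by positivity)]
        congr 1; ext i; rw [Real.norm_eq_abs, sq_abs]
      have h2 : (tailNorm n h0 y) ^ 2
          = ∑ i ∈ Finset.univ.erase i0, (y i) ^ 2 := by
        rw [tailNorm, Real.sq_sqrt (Finset.sum_nonneg fun i _ => sq_nonneg _)]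
      rw [h1, h2, htdef, ← Finset.add_sum_erase _ _ (Finset.mem_univ i0)]
    have htail' : 2 * tailNorm n h0 y < t := by rw [htdef]; exact htail
    have ht45 : 4 * ‖y‖ ≤ 5 * t :=
      scd_aux_t ‖y‖ t (tailNorm n h0 y) hT0 htail' hsq hs0
    have hub : D ≤ Γ⁻¹ * ((c - 1) * (δ * t)) + δ / 4 * (Γ⁻¹ * m) := by
      have h := (abs_le.mp hmvt).2
      linarith
    exact scd_aux_ii D Γ⁻¹ δ c t ‖y‖ lam m hΓi hδ hc1 hm ht45 hs0 hmu1 hm0 hub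
end
end
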